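/- Let P be a reduced labeled oriented tree whose maximal proper sub-LOTs T₁, …, Tₙ are pairwise disjoint. Choose a vertex tᵢ in each Tᵢ, replace every edge label of P lying in Tᵢ by tᵢ, and collapse each Tᵢ to the vertex tᵢ, obtaining a labeled oriented tree P′. Then P′ is compressed, i.e., no edge of P′ is labeled with one of its own endpoints. -/

import Mathlib

/-- A labeled oriented graph (LOG): each edge `e` has an initial vertex `init e`,
a terminal vertex `term e`, and a label `label e`, which is a vertex.
An edge `e = [x,z,y]` has `init e = x`, `label e = z`, `term e = y`. -/
structure LOG (V E : Type) where
  init : E → V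
  label : E → V
  term : E → V

namespace LOG

variable {V E : Type}

/-- The underlying simple graph of a LOG. -/
def graph (G : LOG V E) : SimpleGraph V :=
  SimpleGraph.fromRel fun a b => ∃ e, G.init e = a ∧ G.term e = b

/-- The underlying unoriented multigraph is a tree: there are no loops, distinct
edges have distinct endpoint pairs, and the underlying simple graph is a tree. -/
def IsTreeGraph (G : LOG V E) : Prop :=
  (∀ e, G.init e ≠ G.term e) ∧
    Function.Injective (fun e => s(G.init e, G.term e)) ∧ G.graph.IsTree

/-- A LOG is injective if each vertex occurs at most once as an edge label. -/
def InjectiveLabels (G : LOG V E) : Prop := Function.Injective G.label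

/-- The simple graph induced by a subgraph, given by a vertex set `VS` and an edge set `ES`. -/
def subgraph (G : LOG V E) (VS : Set V) (ES : Set E) : SimpleGraph VS :=
  SimpleGraph.fromRel fun a b => ∃ e ∈ ES, G.init e = (a : V) ∧ G.term e = (b : V)

/-- A sub-LOT: a connected subgraph containing at least one edge, all of whose
edge labels are vertices of the subgraph. -/
structure IsSubLOT (G : LOG V E) (VS : Set V) (ES : Set E) : Prop where
  edge_nonempty : ES.Nonempty
  init_mem : ∀ e ∈ ES, G.init e ∈ VS
  term_mem : ∀ e ∈ ES, G.term e ∈ VS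
  label_mem : ∀ e ∈ ES, G.label e ∈ VS
  connected : (G.subgraph VS ES).Connected

end LOG

namespace LOG

variable {V E : Type}

/-- A proper sub-LOT: a sub-LOT that is not all of `G`. -/
def IsProperSubLOT (G : LOG V E) (VS : Set V) (ES : Set E) : Prop :=
  G.IsSubLOT VS ES ∧ ¬(VS = Set.univ ∧ ES = Set.univ)

/-- A maximal proper sub-LOT: a proper sub-LOT not properly contained in any
other proper sub-LOT. -/
def IsMaxProperSubLOT (G : LOG V E) (VS : Set V) (ES : Set E) : Prop :=
  G.IsProperSubLOT VS ES ∧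
    ∀ VS' ES', G.IsProperSubLOT VS' ES' → VS ⊆ VS' → ES ⊆ ES' → VS = VS' ∧ ES = ES'

end LOG

namespace LOG

variable {V E : Type}

/-- A LOG is compressed if no edge is labeled with one of its own endpoints. -/
def Compressed (G : LOG V E) : Prop := ∀ e, G.label e ≠ G.init e ∧ G.label e ≠ G.term e

/-- A LOG is boundary reduced if every boundary vertex (vertex of valency one)
occurs as an edge label. -/
def BoundaryReduced (G : LOG V E) : Prop :=
  ∀ v : V, (∃! e, G.init e = v ∨ G.term e = v) → ∃ e, G.label e = v

/-- A LOG is interior reduced if no vertex has two adjacent edges with the same label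
that both point away from, or both point towards, that vertex. -/
def InteriorReduced (G : LOG V E) : Prop :=
  ∀ e f, e ≠ f → G.label e = G.label f → G.init e ≠ G.init f ∧ G.term e ≠ G.term f

/-- A LOG is reduced if it is compressed, boundary reduced and interior reduced. -/
def Reduced (G : LOG V E) : Prop := G.Compressed ∧ G.BoundaryReduced ∧ G.InteriorReduced

end LOG


section Aux
variable {V E : Type}

open SimpleGraph in
lemma LOG.subgraph_adj (P : LOG V E) {VS : Set V} {ES : Set E} {a b : VS} :
    (P.subgraph VS ES).Adj a b ↔ a ≠ b ∧
      ((∃ e ∈ ES, P.init e = (a : V) ∧ P.term e = (b : V)) ∨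
       (∃ e ∈ ES, P.init e = (b : V) ∧ P.term e = (a : V))) :=
  SimpleGraph.fromRel_adj _ _ _

open SimpleGraph in
lemma LOG.graph_adj (P : LOG V E) {a b : V} :
    P.graph.Adj a b ↔ a ≠ b ∧
      ((∃ e, P.init e = a ∧ P.term e = b) ∨ (∃ e, P.init e = b ∧ P.term e = a)) :=
  SimpleGraph.fromRel_adj _ _ _

open SimpleGraph in
/-- A proper sub-LOT of a LOT cannot have full vertex set. -/
lemma LOG.vs_ne_univ (P : LOG V E) (htree : P.IsTreeGraph) {VS : Set V} {ES : Set E}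
    (h : P.IsProperSubLOT VS ES) : VS ≠ Set.univ := by
  intro hV
  have hE : ES ≠ Set.univ := fun hE => h.2 ⟨hV, hE⟩
  obtain ⟨e, he⟩ : ∃ e, e ∉ ES := by
    by_contra h'; push_neg at h'; exact hE (Set.eq_univ_of_forall h')
  have hadj : P.graph.Adj (P.init e) (P.term e) :=
    P.graph_adj.mpr ⟨htree.1 e, Or.inl ⟨e, rfl, rfl⟩⟩
  have hbridge := (isAcyclic_iff_forall_adj_isBridge.mp htree.2.2.IsAcyclic) hadj
  rw [isBridge_iff] at hbridge
  apply hbridge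
  have hmemI : P.init e ∈ VS := by rw [hV]; trivial
  have hmemT : P.term e ∈ VS := by rw [hV]; trivial
  have hreach : (P.subgraph VS ES).Reachable ⟨P.init e, hmemI⟩ ⟨P.term e, hmemT⟩ :=
    h.1.connected _ _
  let f : P.subgraph VS ES →g (P.graph \ fromEdgeSet {s(P.init e, P.term e)}) := by
    refine ⟨fun v => (v : V), ?_⟩
    intro a b hab
    rw [LOG.subgraph_adj] at hab
    obtain ⟨hne, hab⟩ := hab
    have hne' : (a : V) ≠ b := fun hh => hne (Subtype.ext hh)
    rw [SimpleGraph.sdiff_adj]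
    constructor
    · refine P.graph_adj.mpr ⟨hne', ?_⟩
      rcases hab with ⟨g, _, h1, h2⟩ | ⟨g, _, h1, h2⟩
      · exact Or.inl ⟨g, h1, h2⟩
      · exact Or.inr ⟨g, h1, h2⟩
    · rw [fromEdgeSet_adj]
      rintro ⟨hs, -⟩
      rw [Set.mem_singleton_iff] at hs
      rcases hab with ⟨g, hg, h1, h2⟩ | ⟨g, hg, h1, h2⟩
      · have : g = e := htree.2.1 (by simp only [h1, h2]; exact hs)
        exact he (this ▸ hg)
      · have : g = e := htree.2.1 (by simp only [h1, h2, Sym2.eq_swap]; exact hs)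
        exact he (this ▸ hg)
  exact hreach.map f

open SimpleGraph in
/-- A maximal proper sub-LOT cannot be extended by an edge whose label and one of
whose endpoints lie in it. -/
lemma LOG.no_extend (P : LOG V E) (htree : P.IsTreeGraph) (hred : P.Reduced)
    {VS : Set V} {ES : Set E} (hmax : P.IsMaxProperSubLOT VS ES)
    {e : E} (he : e ∉ ES) (hl : P.label e ∈ VS)
    (hx : P.init e ∈ VS ∨ P.term e ∈ VS) : False := by
  set VS' : Set V := VS ∪ {P.init e, P.term e} with hVS'
  set ES' : Set E := insert e ES with hES'
  have hVsub : VS ⊆ VS' := Set.subset_union_left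
  have hEsub : ES ⊆ ES' := Set.subset_insert _ _
  have hinit' : P.init e ∈ VS' := Or.inr (Or.inl rfl)
  have hterm' : P.term e ∈ VS' := Or.inr (Or.inr rfl)
  have heE' : e ∈ ES' := Set.mem_insert _ _
  have hVne := P.vs_ne_univ htree hmax.1
  -- the extended pair is a sub-LOT
  have hsub : P.IsSubLOT VS' ES' := by
    refine ⟨⟨e, heE'⟩, ?_, ?_, ?_, ?_⟩
    · intro f hf
      rcases Set.mem_insert_iff.mp hf with rfl | hf
      · exact hinit'
      · exact hVsub (hmax.1.1.init_mem f hf)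
    · intro f hf
      rcases Set.mem_insert_iff.mp hf with rfl | hf
      · exact hterm'
      · exact hVsub (hmax.1.1.term_mem f hf)
    · intro f hf
      rcases Set.mem_insert_iff.mp hf with rfl | hf
      · exact hVsub hl
      · exact hVsub (hmax.1.1.label_mem f hf)
    · -- connectivity
      rw [SimpleGraph.connected_iff]
      refine ⟨?_, ⟨⟨P.init e, hinit'⟩⟩⟩
      let hom : P.subgraph VS ES →g P.subgraph VS' ES' := by
        refine ⟨fun v => ⟨(v : V), hVsub v.2⟩, ?_⟩
        intro a b hab
        rw [LOG.subgraph_adj] at hab ⊢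
        obtain ⟨hne, hab⟩ := hab
        refine ⟨fun hh => hne (Subtype.ext (Subtype.mk_eq_mk.mp hh)), ?_⟩
        rcases hab with ⟨g, hg, h1, h2⟩ | ⟨g, hg, h1, h2⟩
        · exact Or.inl ⟨g, hEsub hg, h1, h2⟩
        · exact Or.inr ⟨g, hEsub hg, h1, h2⟩
      have hold : ∀ (a b : V) (ha : a ∈ VS) (hb : b ∈ VS),
          (P.subgraph VS' ES').Reachable ⟨a, hVsub ha⟩ ⟨b, hVsub hb⟩ := by
        intro a b ha hb
        exact (hmax.1.1.connected ⟨a, ha⟩ ⟨b, hb⟩).map hom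
      have hedge : (P.subgraph VS' ES').Adj ⟨P.init e, hinit'⟩ ⟨P.term e, hterm'⟩ := by
        rw [LOG.subgraph_adj]
        exact ⟨fun hh => htree.1 e (congrArg Subtype.val hh),
          Or.inl ⟨e, heE', rfl, rfl⟩⟩
      have hto : ∀ u : VS', ∃ (w : V) (hw : w ∈ VS),
          (P.subgraph VS' ES').Reachable u ⟨w, hVsub hw⟩ := by
        rintro ⟨u, hu⟩
        simp only [hVS', Set.mem_union, Set.mem_insert_iff, Set.mem_singleton_iff] at hu
        rcases hu with hu | rfl | rfl
        · exact ⟨u, hu, Reachable.refl _⟩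
        · rcases hx with hin | hin
          · exact ⟨P.init e, hin, Reachable.refl _⟩
          · exact ⟨P.term e, hin, hedge.reachable⟩
        · rcases hx with hin | hin
          · exact ⟨P.init e, hin, hedge.symm.reachable⟩
          · exact ⟨P.term e, hin, Reachable.refl _⟩
      intro u v
      obtain ⟨wu, hwu, hu⟩ := hto u
      obtain ⟨wv, hwv, hv⟩ := hto v
      exact hu.trans ((hold wu wv hwu hwv).trans hv.symm)
  -- the extended pair is proper
  have hproper : P.IsProperSubLOT VS' ES' := by
    refine ⟨hsub, ?_⟩
    rintro ⟨hVu, hEu⟩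
    rcases hx with hin | hin
    · -- init e ∈ VS; derive term e ∉ VS
      have hterm_not : P.term e ∉ VS := by
        intro htm
        apply hVne
        rw [← hVu, hVS']
        symm
        apply Set.union_eq_self_of_subset_right
        intro x hxm
        rcases Set.mem_insert_iff.mp hxm with rfl | hxm
        · exact hin
        · rw [Set.mem_singleton_iff] at hxm; exact hxm ▸ htm
      have huniq : ∃! f, P.init f = P.term e ∨ P.term f = P.term e := by
        refine ⟨e, Or.inr rfl, ?_⟩
        intro f hf
        have hf' : f ∈ ES' := by rw [hEu]; trivial
        rcases Set.mem_insert_iff.mp hf' with rfl | hfE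
        · rfl
        · exfalso
          rcases hf with hh | hh
          · exact hterm_not (hh ▸ hmax.1.1.init_mem f hfE)
          · exact hterm_not (hh ▸ hmax.1.1.term_mem f hfE)
      obtain ⟨g, hg⟩ := hred.2.1 _ huniq
      have hg' : g ∈ ES' := by rw [hEu]; trivial
      rcases Set.mem_insert_iff.mp hg' with rfl | hgE
      · exact (hred.1 g).2 hg
      · exact hterm_not (hg ▸ hmax.1.1.label_mem g hgE)
    · -- term e ∈ VS; derive init e ∉ VS
      have hinit_not : P.init e ∉ VS := by
        intro htm
        apply hVne
        rw [← hVu, hVS']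
        symm
        apply Set.union_eq_self_of_subset_right
        intro x hxm
        rcases Set.mem_insert_iff.mp hxm with rfl | hxm
        · exact htm
        · rw [Set.mem_singleton_iff] at hxm; exact hxm ▸ hin
      have huniq : ∃! f, P.init f = P.init e ∨ P.term f = P.init e := by
        refine ⟨e, Or.inl rfl, ?_⟩
        intro f hf
        have hf' : f ∈ ES' := by rw [hEu]; trivial
        rcases Set.mem_insert_iff.mp hf' with rfl | hfE
        · rfl
        · exfalso
          rcases hf with hh | hh
          · exact hinit_not (hh ▸ hmax.1.1.init_mem f hfE)
          · exact hinit_not (hh ▸ hmax.1.1.term_mem f hfE)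
      obtain ⟨g, hg⟩ := hred.2.1 _ huniq
      have hg' : g ∈ ES' := by rw [hEu]; trivial
      rcases Set.mem_insert_iff.mp hg' with rfl | hgE
      · exact (hred.1 g).1 hg
      · exact hinit_not (hg ▸ hmax.1.1.label_mem g hgE)
  have hESeq := (hmax.2 VS' ES' hproper hVsub hEsub).2
  exact he (by rw [hESeq]; exact heE')

/-- If two vertices have the same image under the collapsing map, they are equal
or lie in a common `VS i`. -/
lemma pi_eq_cases {V : Type} {n : ℕ} {VS : Fin n → Set V} {π : V → V}
    (hdisj : ∀ i j, i ≠ j → VS i ∩ VS j = ∅)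
    (hfix : ∀ v, (∀ i, v ∉ VS i) → π v = v)
    (hcoll : ∀ i, ∃ t ∈ VS i, ∀ v ∈ VS i, π v = t)
    {x y : V} (h : π x = π y) : x = y ∨ ∃ i, x ∈ VS i ∧ y ∈ VS i := by
  by_cases hx : ∃ i, x ∈ VS i
  · obtain ⟨i, hxi⟩ := hx
    obtain ⟨t, htmem, ht⟩ := hcoll i
    by_cases hy : ∃ j, y ∈ VS j
    · obtain ⟨j, hyj⟩ := hy
      obtain ⟨s, hsmem, hs⟩ := hcoll j
      have hts : t = s := by rw [← ht x hxi, ← hs y hyj, h]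
      by_cases hij : i = j
      · subst hij; exact Or.inr ⟨i, hxi, hyj⟩
      · exfalso
        have : t ∈ VS i ∩ VS j := ⟨htmem, hts ▸ hsmem⟩
        rw [hdisj i j hij] at this
        exact this
    · push_neg at hy
      have hyt : y = t := by rw [← hfix y hy, ← h, ht x hxi]
      exact absurd (by rw [hyt]; exact htmem) (hy i)
  · push_neg at hx
    by_cases hy : ∃ j, y ∈ VS j
    · obtain ⟨j, hyj⟩ := hy
      obtain ⟨s, hsmem, hs⟩ := hcoll j
      have hxs : x = s := by rw [← hfix x hx, h, hs y hyj]
      exact absurd (by rw [hxs]; exact hsmem) (hx j)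
    · push_neg at hy
      left
      rw [← hfix x hx, ← hfix y hy]
      exact h


end Aux

/-- **The collapsed LOT is compressed.**
Let `P` be a reduced labeled oriented tree whose maximal proper sub-LOTs
`Tᵢ = (VS i, ES i)` are pairwise disjoint.  Choose a vertex `tᵢ` in each `Tᵢ`, replace
every edge label lying in `Tᵢ` by `tᵢ` and collapse each `Tᵢ` to `tᵢ`; this is encoded
by a collapsing map `π : V → V` that is constant, with value some `tᵢ ∈ VS i`, on each
`VS i` and is the identity elsewhere.  The resulting labeled oriented tree `P′` has edge
set `{e // e ∉ ⋃ i, ES i}`, initial-vertex map `π ∘ init`, terminal-vertex map `π ∘ term`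
and label map `π ∘ label`.  Then `P′` is compressed: no edge of `P′` is labeled with one
of its own endpoints. -/
theorem collapsed_lot_compressed {V E : Type} [Fintype V] [Fintype E] {n : ℕ}
    (P : LOG V E) (htree : P.IsTreeGraph) (hred : P.Reduced)
    (VS : Fin n → Set V) (ES : Fin n → Set E)
    (hmax : ∀ i, P.IsMaxProperSubLOT (VS i) (ES i))
    (hcompl : ∀ VS' ES', P.IsMaxProperSubLOT VS' ES' → ∃ i, VS' = VS i ∧ ES' = ES i)
    (hdisj : ∀ i j, i ≠ j → VS i ∩ VS j = ∅)
    (π : V → V)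
    (hfix : ∀ v, (∀ i, v ∉ VS i) → π v = v)
    (hcoll : ∀ i, ∃ t ∈ VS i, ∀ v ∈ VS i, π v = t) :
    ∀ e : E, e ∉ (⋃ i, ES i) →
      π (P.label e) ≠ π (P.init e) ∧ π (P.label e) ≠ π (P.term e) := by
  intro e he
  have hnotmem : ∀ i, e ∉ ES i := fun i h => he (Set.mem_iUnion.mpr ⟨i, h⟩)
  constructor
  · intro h
    rcases pi_eq_cases hdisj hfix hcoll h with heq | ⟨i, h1, h2⟩
    · exact (hred.1 e).1 heq
    · exact P.no_extend htree hred (hmax i) (hnotmem i) h1 (Or.inl h2)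
  · intro h
    rcases pi_eq_cases hdisj hfix hcoll h with heq | ⟨i, h1, h2⟩
    · exact (hred.1 e).2 heq
    · exact P.no_extend htree hred (hmax i) (hnotmem i) h1 (Or.inr h2)
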